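/- arXiv:math/0409552 — 2 statements merged into one kernel-verified Lean document; each statement's English description precedes it below -/
import Mathlib

section
/- For every z ∈ ℂ and r > 0, (1/2π)∫_0^{2π} log(1/|z - re^{iφ}|) dφ equals -log r if |z| ≤ r, and equals -log|z| if |z| > r. -/
open MeasureTheory intervalIntegral
open scoped Real

lemma log_intInt {c : ℝ} (hc : 0 ≤ c) : IntervalIntegrable Real.log volume 0 c := by
  have hg : IntervalIntegrable (fun x : ℝ => 2 * x ^ (-(1:ℝ)/2) + |Real.log c|) volume 0 c :=
    ((intervalIntegrable_rpow' (by norm_num)).const_mul 2).add intervalIntegrable_const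
  refine hg.mono_fun Real.measurable_log.aestronglyMeasurable ?_
  filter_upwards [ae_restrict_mem measurableSet_uIoc] with x hx
  rw [Set.uIoc_of_le hc] at hx
  obtain ⟨hx0, hxc⟩ := hx
  have hrp : 0 < x ^ (-(1:ℝ)/2) := Real.rpow_pos_of_pos hx0 _
  have hb : ‖(2 * x ^ (-(1:ℝ)/2) + |Real.log c|)‖ = 2 * x ^ (-(1:ℝ)/2) + |Real.log c| := by
    rw [Real.norm_eq_abs, abs_of_nonneg (by positivity)]
  rw [Real.norm_eq_abs, hb]
  rcases le_or_gt x 1 with h1 | h1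
  · rw [abs_of_nonpos (Real.log_nonpos hx0.le h1)]
    have h2 : -Real.log x = 2 * Real.log (x ^ (-(1:ℝ)/2)) := by
      rw [Real.log_rpow hx0]; ring
    have h3 : Real.log (x ^ (-(1:ℝ)/2)) ≤ x ^ (-(1:ℝ)/2) :=
      (Real.log_le_sub_one_of_pos hrp).trans (by linarith)
    nlinarith [abs_nonneg (Real.log c)]
  · rw [abs_of_nonneg (Real.log_nonneg h1.le)]
    have hlogx : Real.log x ≤ Real.log c := Real.log_le_log (by positivity) hxc
    have := le_abs_self (Real.log c)
    nlinarith

lemma norm_one_sub_exp (θ : ℝ) :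
    ‖(1:ℂ) - Complex.exp (θ * Complex.I)‖ = 2 * |Real.sin (θ/2)| := by
  have key : (1:ℂ) - Complex.exp (θ * Complex.I)
      = Complex.exp ((θ/2 : ℝ) * Complex.I) * (-2 * (Real.sin (θ/2) : ℂ) * Complex.I) := by
    have hθ : (θ : ℂ) * Complex.I = (2 * ((θ/2 : ℝ) : ℂ)) * Complex.I := by push_cast; ring
    rw [hθ, Complex.exp_mul_I, Complex.exp_mul_I, Complex.cos_two_mul, Complex.sin_two_mul]
    simp only [← Complex.ofReal_sin]
    have this1 : ((Real.sin (θ/2) : ℂ))^2 + Complex.cos (((θ/2 : ℝ)) : ℂ)^2 = 1 := by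
      rw [Complex.ofReal_sin]; exact Complex.sin_sq_add_cos_sq _
    linear_combination (-2 : ℂ) * this1 + 2 * ((Real.sin (θ/2) : ℂ))^2 * Complex.I_sq
  rw [key, norm_mul, Complex.norm_exp_ofReal_mul_I, one_mul,
    norm_mul, norm_mul, Complex.norm_I, mul_one, Complex.norm_real, Real.norm_eq_abs]
  have : ‖(-2:ℂ)‖ = 2 := by
    rw [norm_neg]; norm_num
  rw [this]

lemma sin_half_lower {θ : ℝ} (h0 : 0 < θ) (h2 : θ < 2*π) :
    θ * (2*π - θ) / (2*π^2) ≤ Real.sin (θ/2) := by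
  have hπ := Real.pi_pos
  rcases le_or_gt θ π with h | h
  · have hj : 2/π * (θ/2) ≤ Real.sin (θ/2) :=
      Real.mul_le_sin (by linarith) (by linarith)
    have : θ * (2*π - θ) / (2*π^2) ≤ 2/π * (θ/2) := by
      rw [div_le_iff₀ (by positivity)]
      have : 2/π * (θ/2) * (2*π^2) = 2*π*θ := by field_simp
      nlinarith
    linarith
  · have hsin : Real.sin (θ/2) = Real.sin (π - θ/2) := (Real.sin_pi_sub _).symm
    have hj : 2/π * (π - θ/2) ≤ Real.sin (π - θ/2) :=
      Real.mul_le_sin (by linarith) (by linarith)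
    have : θ * (2*π - θ) / (2*π^2) ≤ 2/π * (π - θ/2) := by
      rw [div_le_iff₀ (by positivity)]
      have h3 : 2/π * (π - θ/2) * (2*π^2) = 2*π*(2*π - θ) := by field_simp
      nlinarith
    linarith [hsin ▸ hj]

/-- The function `θ ↦ log ‖1 - e^{iθ}‖` is interval integrable on `[0, 2π]`. -/
lemma g_intInt : IntervalIntegrable (fun θ : ℝ => Real.log ‖(1:ℂ) - Complex.exp (θ * Complex.I)‖)
    volume 0 (2*π) := by
  have hπ := Real.pi_pos
  have hπ3 : (3:ℝ) < π := Real.pi_gt_three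
  have lπ : 0 ≤ Real.log (π^2) := Real.log_nonneg (by nlinarith)
  have l2 : 0 ≤ Real.log 2 := Real.log_nonneg (by norm_num)
  have hG : IntervalIntegrable
      (fun θ : ℝ => Real.log 2 + Real.log (π^2) + |Real.log θ| + |Real.log (2*π - θ)|)
      volume 0 (2*π) := by
    have h1 : IntervalIntegrable (fun θ : ℝ => |Real.log θ|) volume 0 (2*π) :=
      (log_intInt (by positivity)).norm
    have h2 : IntervalIntegrable (fun θ : ℝ => |Real.log (2*π - θ)|) volume 0 (2*π) := by
      have := (h1.comp_sub_left (2*π)).symm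
      simpa using this
    exact (intervalIntegrable_const.add h1).add h2
  refine hG.mono_fun ?_ ?_
  · apply Measurable.aestronglyMeasurable
    apply Real.measurable_log.comp
    exact (Continuous.norm (by continuity)).measurable
  · filter_upwards [ae_restrict_mem measurableSet_uIoc] with θ hθ
    rw [Set.uIoc_of_le (by positivity)] at hθ
    obtain ⟨hθ0, hθ2⟩ := hθ
    have hGnn : 0 ≤ Real.log 2 + Real.log (π^2) + |Real.log θ| + |Real.log (2*π - θ)| := by
      positivity
    rw [Real.norm_eq_abs, Real.norm_eq_abs, abs_of_nonneg hGnn]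
    rcases eq_or_lt_of_le hθ2 with heq | hlt
    · rw [heq]
      have hz : (1:ℂ) - Complex.exp ((2*π : ℝ) * Complex.I) = 0 := by
        have : ((2*π : ℝ) : ℂ) * Complex.I = 2*π*Complex.I := by push_cast; ring
        rw [this, Complex.exp_two_pi_mul_I]; ring
      rw [heq] at hGnn
      rw [hz]
      simpa using hGnn
    · -- 0 < θ < 2π
      have h2θ : 0 < 2*π - θ := by linarith
      rw [norm_one_sub_exp θ, abs_of_nonneg (Real.sin_nonneg_of_nonneg_of_le_pi (by linarith) (by linarith))]
      have hlow := sin_half_lower hθ0 hlt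
      have hlowpos : 0 < θ * (2*π - θ) / (π^2) := by positivity
      have hsinpos : 0 < Real.sin (θ/2) := by
        refine lt_of_lt_of_le ?_ hlow
        positivity
      have hloglow : Real.log θ + Real.log (2*π - θ) - Real.log (π^2) ≤ Real.log (2 * Real.sin (θ/2)) := by
        have e1 : Real.log (θ * (2*π - θ) / (π^2)) ≤ Real.log (2 * Real.sin (θ/2)) := by
          apply Real.log_le_log hlowpos
          rw [div_le_iff₀ (by positivity)] at hlow ⊢
          nlinarith
        have e2 : Real.log (θ * (2*π - θ) / (π^2)) = Real.log θ + Real.log (2*π - θ) - Real.log (π^2) := by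
          rw [Real.log_div (by positivity) (by positivity), Real.log_mul (ne_of_gt hθ0) (ne_of_gt h2θ)]
        linarith
      have hlogup : Real.log (2 * Real.sin (θ/2)) ≤ Real.log 2 := by
        apply Real.log_le_log (by positivity)
        nlinarith [Real.sin_le_one (θ/2)]
      rw [abs_le]
      constructor
      · have a1 := neg_abs_le (Real.log θ)
        have a2 := neg_abs_le (Real.log (2*π - θ))
        linarith
      · have a1 := abs_nonneg (Real.log θ)
        have a2 := abs_nonneg (Real.log (2*π - θ))
        linarith

/-- Mean value property: for `‖w‖ < 1`, the circle average of `log ‖1 - w e^{iθ}‖` vanishes. -/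
lemma avg_log_one_sub {w : ℂ} (hw : ‖w‖ < 1) :
    ∫ θ in (0:ℝ)..(2*π), Real.log ‖1 - w * Complex.exp (θ * Complex.I)‖ = 0 := by
  set f : ℂ → ℂ := fun ζ => Complex.log (1 - w * ζ) with hf
  have hne : ∀ ζ : ℂ, ‖ζ‖ ≤ 1 → (1 - w * ζ) ∈ Complex.slitPlane := by
    intro ζ hζ
    rw [Complex.mem_slitPlane_iff]
    left
    have h1 : (w * ζ).re ≤ ‖w * ζ‖ := by
      exact Complex.re_le_norm _
    have h2 : ‖w * ζ‖ ≤ ‖w‖ := by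
      rw [norm_mul]
      calc ‖w‖ * ‖ζ‖ ≤ ‖w‖ * 1 := by
            apply mul_le_mul_of_nonneg_left hζ (norm_nonneg w)
        _ = ‖w‖ := mul_one _
    simp only [Complex.sub_re, Complex.one_re]
    linarith
  have hdiff : ∀ ζ : ℂ, ζ ∈ Metric.closedBall (0:ℂ) 1 → DifferentiableAt ℂ f ζ := by
    intro ζ hζ
    rw [Metric.mem_closedBall, dist_zero_right] at hζ
    exact (Complex.differentiableAt_log (hne ζ hζ)).comp ζ
      ((differentiableAt_const (1:ℂ)).sub (differentiableAt_id.const_mul w))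
  have hC := Complex.circleIntegral_sub_center_inv_smul_of_differentiable_on_off_countable
    one_pos Set.countable_empty
    (fun ζ hζ => (hdiff ζ hζ).continuousAt.continuousWithinAt)
    (fun ζ hζ => hdiff ζ (Metric.ball_subset_closedBall hζ.1))
  have hf0 : f 0 = 0 := by simp [hf]
  rw [hf0, smul_zero] at hC
  have hC2 : ∫ θ in (0:ℝ)..(2*π), Complex.I * Complex.log (1 - w * Complex.exp (θ * Complex.I)) = 0 := by
    rw [← hC, circleIntegral]
    apply intervalIntegral.integral_congr
    intro θ _
    show Complex.I * Complex.log (1 - w * Complex.exp (θ * Complex.I))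
        = deriv (circleMap 0 1) θ • (circleMap 0 1 θ - 0)⁻¹ • f (circleMap 0 1 θ)
    have hmap : circleMap 0 1 θ = Complex.exp (θ * Complex.I) := by
      simp [circleMap]
    rw [deriv_circleMap, hmap, sub_zero, smul_eq_mul, smul_eq_mul, hf]
    have hexp := Complex.exp_ne_zero ((θ:ℂ) * Complex.I)
    field_simp
  have hexp1 : ∀ θ : ℝ, ‖Complex.exp ((θ:ℂ) * Complex.I)‖ ≤ 1 := by
    intro θ
    rw [Complex.norm_exp_ofReal_mul_I]
  have hcont : Continuous fun θ : ℝ => Complex.log (1 - w * Complex.exp (θ * Complex.I)) := by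
    refine continuous_iff_continuousAt.mpr fun θ => ?_
    have hin : Continuous fun θ : ℝ => 1 - w * Complex.exp (θ * Complex.I) := by continuity
    exact ContinuousAt.comp (g := Complex.log)
      (continuousAt_clog (hne _ (hexp1 θ))) hin.continuousAt
  have hII : IntervalIntegrable (fun θ : ℝ => Complex.log (1 - w * Complex.exp (θ * Complex.I)))
      volume 0 (2*π) := hcont.intervalIntegrable _ _
  have hzero : ∫ θ in (0:ℝ)..(2*π), Complex.log (1 - w * Complex.exp (θ * Complex.I)) = 0 := by
    have := intervalIntegral.integral_const_mul (a := (0:ℝ)) (b := 2*π) (μ := volume) Complex.I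
      (fun θ : ℝ => Complex.log (1 - w * Complex.exp (θ * Complex.I)))
    rw [this] at hC2
    have hI : Complex.I ≠ 0 := Complex.I_ne_zero
    exact (mul_eq_zero.mp hC2).resolve_left hI
  have hre : ∀ θ : ℝ, Real.log ‖1 - w * Complex.exp (θ * Complex.I)‖
      = Complex.reCLM (Complex.log (1 - w * Complex.exp (θ * Complex.I))) := by
    intro θ
    simp [Complex.log_re]
  calc ∫ θ in (0:ℝ)..(2*π), Real.log ‖1 - w * Complex.exp (θ * Complex.I)‖
      = ∫ θ in (0:ℝ)..(2*π), Complex.reCLM (Complex.log (1 - w * Complex.exp (θ * Complex.I))) := by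
        apply intervalIntegral.integral_congr; intro θ _; exact hre θ
    _ = Complex.reCLM (∫ θ in (0:ℝ)..(2*π), Complex.log (1 - w * Complex.exp (θ * Complex.I))) :=
        Complex.reCLM.intervalIntegral_comp_comm hII
    _ = 0 := by rw [hzero]; simp

lemma integral_g_zero :
    ∫ θ in (0:ℝ)..(2*π), Real.log ‖(1:ℂ) - Complex.exp (θ * Complex.I)‖ = 0 := by
  have hπ := Real.pi_pos
  set g : ℝ → ℝ := fun θ => Real.log ‖(1:ℂ) - Complex.exp (θ * Complex.I)‖ with hg
  have hsub1 : Set.uIcc (0:ℝ) π ⊆ Set.uIcc (0:ℝ) (2*π) := by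
    rw [Set.uIcc_of_le (by linarith), Set.uIcc_of_le (by linarith)]
    exact Set.Icc_subset_Icc le_rfl (by linarith)
  have hsub2 : Set.uIcc (π:ℝ) (2*π) ⊆ Set.uIcc (0:ℝ) (2*π) := by
    rw [Set.uIcc_of_le (by linarith), Set.uIcc_of_le (by linarith)]
    exact Set.Icc_subset_Icc (by linarith) le_rfl
  have hg1 : IntervalIntegrable g volume 0 π := g_intInt.mono_set hsub1
  have hg2 : IntervalIntegrable g volume π (2*π) := g_intInt.mono_set hsub2
  have hgshift : IntervalIntegrable (fun u => g (u + π)) volume 0 π := by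
    have := hg2.comp_add_right π
    have e1 : π - π = 0 := by ring
    have e2 : 2*π - π = π := by ring
    rwa [e1, e2] at this
  have hsplit : ∫ θ in (0:ℝ)..(2*π), g θ = (∫ θ in (0:ℝ)..π, g θ) + ∫ θ in (π:ℝ)..(2*π), g θ :=
    (integral_add_adjacent_intervals hg1 hg2).symm
  have hdouble : ∫ u in (0:ℝ)..π, g (2*u) = 2⁻¹ * ∫ θ in (0:ℝ)..(2*π), g θ := by
    have := intervalIntegral.integral_comp_mul_left (a := (0:ℝ)) (b := π) g (two_ne_zero)
    rw [this]
    norm_num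
  have hae : ∀ᵐ u : ℝ ∂volume, u ∈ Set.uIoc (0:ℝ) π → g (2*u) = g u + g (u + π) := by
    have hne : ∀ᵐ u : ℝ ∂volume, u ∉ ({π} : Set ℝ) :=
      measure_eq_zero_iff_ae_notMem.mp (measure_singleton π)
    filter_upwards [hne] with u hu hmem
    rw [Set.mem_singleton_iff] at hu
    rw [Set.uIoc_of_le (by linarith)] at hmem
    obtain ⟨hu0, huπ⟩ := hmem
    have huπ' : u < π := lt_of_le_of_ne huπ hu
    -- factorization
    have hfac : (1:ℂ) - Complex.exp ((2*u : ℝ) * Complex.I)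
        = ((1:ℂ) - Complex.exp ((u:ℝ) * Complex.I)) * ((1:ℂ) - Complex.exp (((u + π):ℝ) * Complex.I)) := by
      have h1 : Complex.exp (((u + π):ℝ) * Complex.I) = - Complex.exp ((u:ℝ) * Complex.I) := by
        push_cast
        rw [add_mul, Complex.exp_add, Complex.exp_pi_mul_I]
        ring
      have h2 : Complex.exp ((2*u : ℝ) * Complex.I) = Complex.exp ((u:ℝ) * Complex.I) ^ 2 := by
        rw [← Complex.exp_nat_mul]
        push_cast
        ring_nf
      rw [h1, h2]
      ring
    have hn1 : ‖(1:ℂ) - Complex.exp ((u:ℝ) * Complex.I)‖ ≠ 0 := by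
      rw [norm_one_sub_exp]
      have : 0 < Real.sin (u/2) := Real.sin_pos_of_pos_of_lt_pi (by linarith) (by linarith)
      positivity
    have hn2 : ‖(1:ℂ) - Complex.exp (((u + π):ℝ) * Complex.I)‖ ≠ 0 := by
      rw [norm_one_sub_exp]
      have : 0 < Real.sin ((u+π)/2) := Real.sin_pos_of_pos_of_lt_pi (by linarith) (by linarith)
      positivity
    show Real.log ‖(1:ℂ) - Complex.exp ((2*u : ℝ) * Complex.I)‖ = _
    rw [hfac, norm_mul, Real.log_mul hn1 hn2]
  have hstep : ∫ u in (0:ℝ)..π, g (2*u) = (∫ u in (0:ℝ)..π, g u) + ∫ u in (0:ℝ)..π, g (u + π) := by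
    rw [intervalIntegral.integral_congr_ae (by filter_upwards [hae] with u h hu using h hu)]
    exact intervalIntegral.integral_add hg1 hgshift
  have hshift_int : ∫ u in (0:ℝ)..π, g (u + π) = ∫ θ in (π:ℝ)..(2*π), g θ := by
    have := intervalIntegral.integral_comp_add_right (a := (0:ℝ)) (b := π) g π
    rw [this, zero_add]
    norm_num [two_mul]
  have : 2⁻¹ * ∫ θ in (0:ℝ)..(2*π), g θ = ∫ θ in (0:ℝ)..(2*π), g θ := by
    rw [← hdouble, hstep, hshift_int, ← hsplit]
  linarith

lemma norm_one_sub_smul_pos {w : ℂ} (hw : ‖w‖ < 1) (θ : ℝ) :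
    0 < ‖(1:ℂ) - w * Complex.exp (θ * Complex.I)‖ := by
  have h1 : ‖w * Complex.exp ((θ:ℝ) * Complex.I)‖ = ‖w‖ := by
    rw [norm_mul, Complex.norm_exp_ofReal_mul_I, mul_one]
  have h2 := norm_sub_norm_le (1:ℂ) (w * Complex.exp ((θ:ℝ) * Complex.I))
  rw [norm_one, h1] at h2
  linarith

lemma log_norm_one_sub_cont {w : ℂ} (hw : ‖w‖ < 1) :
    Continuous fun θ : ℝ => Real.log ‖(1:ℂ) - w * Complex.exp (θ * Complex.I)‖ := by
  refine continuous_iff_continuousAt.mpr fun θ => ?_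
  have hin : Continuous fun θ : ℝ => ‖(1:ℂ) - w * Complex.exp (θ * Complex.I)‖ := by
    continuity
  exact ContinuousAt.comp (g := Real.log)
    (Real.continuousAt_log (ne_of_gt (norm_one_sub_smul_pos hw θ))) hin.continuousAt

lemma norm_sub_exp_conj (z : ℂ) (r φ : ℝ) :
    ‖z - (r:ℂ) * Complex.exp (φ * Complex.I)‖
      = ‖(r:ℂ) - (starRingEnd ℂ) z * Complex.exp (φ * Complex.I)‖ := by
  have hconj : (starRingEnd ℂ) (z - (r:ℂ) * Complex.exp (φ * Complex.I))
      = (starRingEnd ℂ) z - (r:ℂ) * Complex.exp ((-φ : ℝ) * Complex.I) := by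
    rw [map_sub, map_mul, Complex.conj_ofReal, ← Complex.exp_conj]
    congr 2
    simp [Complex.conj_I]
  have hmul : Complex.exp ((φ:ℝ) * Complex.I) *
      ((starRingEnd ℂ) z - (r:ℂ) * Complex.exp ((-φ : ℝ) * Complex.I))
      = (starRingEnd ℂ) z * Complex.exp ((φ:ℝ) * Complex.I) - (r:ℂ) := by
    have : Complex.exp ((φ:ℝ) * Complex.I) * Complex.exp ((-φ : ℝ) * Complex.I) = 1 := by
      rw [← Complex.exp_add]
      push_cast
      rw [show (φ:ℂ) * Complex.I + -(φ:ℂ) * Complex.I = 0 by ring, Complex.exp_zero]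
    push_cast at this ⊢
    linear_combination (-(r:ℂ)) * this
  calc ‖z - (r:ℂ) * Complex.exp (φ * Complex.I)‖
      = ‖(starRingEnd ℂ) (z - (r:ℂ) * Complex.exp (φ * Complex.I))‖ := (RCLike.norm_conj _).symm
    _ = ‖(starRingEnd ℂ) z - (r:ℂ) * Complex.exp ((-φ : ℝ) * Complex.I)‖ := by rw [hconj]
    _ = ‖Complex.exp ((φ:ℝ) * Complex.I)‖ * ‖(starRingEnd ℂ) z - (r:ℂ) * Complex.exp ((-φ : ℝ) * Complex.I)‖ := by
        rw [Complex.norm_exp_ofReal_mul_I, one_mul]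
    _ = ‖(starRingEnd ℂ) z * Complex.exp ((φ:ℝ) * Complex.I) - (r:ℂ)‖ := by
        rw [← norm_mul, hmul]
    _ = ‖(r:ℂ) - (starRingEnd ℂ) z * Complex.exp (φ * Complex.I)‖ := norm_sub_rev _ _

/-- **The circle average of the logarithmic kernel**: for every `z ∈ ℂ` and `r > 0`,
`(1/2π) ∫₀^{2π} log (1/|z - r e^{iφ}|) dφ` equals `-log r` if `|z| ≤ r` and `-log |z|`
if `|z| > r`. -/
theorem circle_average_log_inv (z : ℂ) (r : ℝ) (hr : 0 < r) :
    (1 / (2 * Real.pi)) *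
        ∫ φ in (0 : ℝ)..(2 * Real.pi),
          Real.log (1 / ‖z - (r : ℂ) * Complex.exp (φ * Complex.I)‖) =
      if ‖z‖ ≤ r then -Real.log r else -Real.log ‖z‖ := by
  have hπ := Real.pi_pos
  have hrne : (r:ℂ) ≠ 0 := by exact_mod_cast hr.ne'
  have hnr : ‖(r:ℂ)‖ = r := by
    rw [Complex.norm_real, Real.norm_eq_abs, abs_of_pos hr]
  have hneg : ∫ φ in (0:ℝ)..(2*π), Real.log (1 / ‖z - (r:ℂ) * Complex.exp (φ * Complex.I)‖)
      = - ∫ φ in (0:ℝ)..(2*π), Real.log ‖z - (r:ℂ) * Complex.exp (φ * Complex.I)‖ := by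
    rw [← intervalIntegral.integral_neg]
    apply intervalIntegral.integral_congr
    intro φ _
    show Real.log (1 / ‖z - (r:ℂ) * Complex.exp (φ * Complex.I)‖)
        = -Real.log ‖z - (r:ℂ) * Complex.exp (φ * Complex.I)‖
    rw [one_div, Real.log_inv]
  rw [hneg]
  rcases lt_trichotomy ‖z‖ r with hlt | heq | hgt
  · -- interior case ‖z‖ < r
    set w : ℂ := (starRingEnd ℂ) z / r with hwdef
    have hw : ‖w‖ < 1 := by
      rw [hwdef, norm_div, RCLike.norm_conj, hnr, div_lt_one hr]
      exact hlt
    have key : ∀ φ : ℝ, Real.log ‖z - (r:ℂ) * Complex.exp (φ * Complex.I)‖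
        = Real.log r + Real.log ‖(1:ℂ) - w * Complex.exp (φ * Complex.I)‖ := by
      intro φ
      rw [norm_sub_exp_conj z r φ]
      have hfac : (r:ℂ) - (starRingEnd ℂ) z * Complex.exp (φ * Complex.I)
          = (r:ℂ) * ((1:ℂ) - w * Complex.exp (φ * Complex.I)) := by
        rw [hwdef]
        field_simp
      rw [hfac, norm_mul, hnr,
        Real.log_mul hr.ne' (ne_of_gt (norm_one_sub_smul_pos hw φ))]
    have hJ : ∫ φ in (0:ℝ)..(2*π), Real.log ‖z - (r:ℂ) * Complex.exp (φ * Complex.I)‖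
        = 2*π * Real.log r := by
      rw [intervalIntegral.integral_congr (fun φ _ => key φ),
        intervalIntegral.integral_add intervalIntegrable_const
          (((log_norm_one_sub_cont hw)).intervalIntegrable _ _),
        avg_log_one_sub hw, intervalIntegral.integral_const, add_zero, smul_eq_mul, sub_zero]
    rw [hJ, if_pos hlt.le]
    field_simp
  · -- boundary case ‖z‖ = r
    have hz0 : z ≠ 0 := by
      intro h
      rw [h, norm_zero] at heq
      linarith
    set α := Complex.arg z with hα
    have hzeq : z = (r:ℂ) * Complex.exp ((α:ℝ) * Complex.I) := by
      conv_lhs => rw [← Complex.norm_mul_exp_arg_mul_I z]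
      rw [← hα, heq]
    set F : ℝ → ℝ := fun φ => Real.log ‖z - (r:ℂ) * Complex.exp (φ * Complex.I)‖ with hF
    have hper : Function.Periodic F (2*π) := by
      intro φ
      have hexp : Complex.exp ((↑(φ + 2*π)) * Complex.I) = Complex.exp ((φ:ℝ) * Complex.I) := by
        push_cast
        rw [add_mul, Complex.exp_add, Complex.exp_two_pi_mul_I, mul_one]
      simp only [hF, hexp]
    have h1 : ∫ φ in (0:ℝ)..(2*π), F φ = ∫ φ in α..(α+2*π), F φ := by
      have := hper.intervalIntegral_add_eq 0 α
      rwa [zero_add] at this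
    have h2 : ∫ x in (0:ℝ)..(2*π), F (x + α) = ∫ φ in α..(α+2*π), F φ := by
      have := intervalIntegral.integral_comp_add_right (a := (0:ℝ)) (b := 2*π) F α
      rw [this, zero_add, add_comm]
    have h3 : ∫ x in (0:ℝ)..(2*π), F (x + α)
        = ∫ x in (0:ℝ)..(2*π),
            (Real.log r + Real.log ‖(1:ℂ) - Complex.exp (x * Complex.I)‖) := by
      apply intervalIntegral.integral_congr_ae
      have hne : ∀ᵐ x : ℝ ∂volume, x ∉ ({2*π} : Set ℝ) :=
        measure_eq_zero_iff_ae_notMem.mp (measure_singleton _)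
      filter_upwards [hne] with x hx hmem
      rw [Set.mem_singleton_iff] at hx
      rw [Set.uIoc_of_le (by linarith)] at hmem
      obtain ⟨hx0, hx2⟩ := hmem
      have hx2' : x < 2*π := lt_of_le_of_ne hx2 hx
      have hfac : z - (r:ℂ) * Complex.exp ((↑(x + α)) * Complex.I)
          = (r:ℂ) * Complex.exp ((α:ℝ) * Complex.I) * ((1:ℂ) - Complex.exp ((x:ℝ) * Complex.I)) := by
        have hsum : Complex.exp ((↑(x + α)) * Complex.I)
            = Complex.exp ((α:ℝ) * Complex.I) * Complex.exp ((x:ℝ) * Complex.I) := by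
          rw [← Complex.exp_add]
          push_cast
          ring_nf
        conv_lhs => rw [hzeq, hsum]
        ring
      have hpos : 0 < ‖(1:ℂ) - Complex.exp ((x:ℝ) * Complex.I)‖ := by
        rw [norm_one_sub_exp]
        have : 0 < Real.sin (x/2) :=
          Real.sin_pos_of_pos_of_lt_pi (by linarith) (by linarith)
        positivity
      simp only [hF]
      rw [hfac, norm_mul, norm_mul, hnr,
        Complex.norm_exp_ofReal_mul_I, mul_one, Real.log_mul hr.ne' (ne_of_gt hpos)]
    have h4 : ∫ x in (0:ℝ)..(2*π),
        (Real.log r + Real.log ‖(1:ℂ) - Complex.exp (x * Complex.I)‖) = 2*π * Real.log r := by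
      rw [intervalIntegral.integral_add intervalIntegrable_const g_intInt,
        integral_g_zero, add_zero, intervalIntegral.integral_const, smul_eq_mul, sub_zero]
    have hJ : ∫ φ in (0:ℝ)..(2*π), Real.log ‖z - (r:ℂ) * Complex.exp (φ * Complex.I)‖
        = 2*π * Real.log r := by
      show ∫ φ in (0:ℝ)..(2*π), F φ = 2*π * Real.log r
      rw [h1, ← h2, h3, h4]
    rw [hJ, if_pos heq.le]
    field_simp
  · -- exterior case ‖z‖ > r
    have hz0 : z ≠ 0 := by
      intro h
      rw [h, norm_zero] at hgt
      linarith
    have hznorm : 0 < ‖z‖ := norm_pos_iff.mpr hz0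
    set w : ℂ := (r:ℂ) / z with hwdef
    have hw : ‖w‖ < 1 := by
      rw [hwdef, norm_div, hnr, div_lt_one hznorm]
      exact hgt
    have key : ∀ φ : ℝ, Real.log ‖z - (r:ℂ) * Complex.exp (φ * Complex.I)‖
        = Real.log ‖z‖ + Real.log ‖(1:ℂ) - w * Complex.exp (φ * Complex.I)‖ := by
      intro φ
      have hfac : z - (r:ℂ) * Complex.exp (φ * Complex.I)
          = z * ((1:ℂ) - w * Complex.exp (φ * Complex.I)) := by
        rw [hwdef]
        field_simp
      rw [hfac, norm_mul, Real.log_mul hznorm.ne' (ne_of_gt (norm_one_sub_smul_pos hw φ))]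
    have hJ : ∫ φ in (0:ℝ)..(2*π), Real.log ‖z - (r:ℂ) * Complex.exp (φ * Complex.I)‖
        = 2*π * Real.log ‖z‖ := by
      rw [intervalIntegral.integral_congr (fun φ _ => key φ),
        intervalIntegral.integral_add intervalIntegrable_const
          (((log_norm_one_sub_cont hw)).intervalIntegrable _ _),
        avg_log_one_sub hw, intervalIntegral.integral_const, add_zero, smul_eq_mul, sub_zero]
    rw [hJ, if_neg (not_le.mpr hgt)]
    field_simp
end

section
/- Let λ > 1 and let m = m(n) satisfy m(n)/n → λ as n → ∞. With C_{[m,n]} := π^n n! ∏_{j=0}^{n-1} [ (m-n+j-1 choose j)^{-1} · 1/(m-n+j) ], one has lim_{n→∞} (1/n²) log C_{[m(n),n]} = B, where B = -λ² log λ / 2 + λ² log(λ-1)/2 - log(λ-1)/2 + (λ-1)/2. -/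
open Filter Topology Finset

noncomputable section

/-- The normalizing constant `C_{[m,n]}` of the joint eigenvalue density of the `n × n`
truncation of an `m × m` Haar unitary matrix. -/
def Cconst (m n : ℕ) : ℝ :=
  Real.pi ^ n * (n.factorial : ℝ) *
    ∏ j ∈ Finset.range n, ((((m - n + j - 1).choose j : ℕ) : ℝ)⁻¹ * ((m - n + j : ℕ) : ℝ)⁻¹)

/-- The constant `B`. -/
def Bconst (l : ℝ) : ℝ :=
  -(l ^ 2 * Real.log l) / 2 + l ^ 2 * Real.log (l - 1) / 2 - Real.log (l - 1) / 2
    + (l - 1) / 2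


def phiAux (x : ℝ) : ℝ := x * Real.log x - x

def psiAux (x : ℝ) : ℝ := x^2/2 * Real.log x - x^2/4 - x*(x-1)/2

def Ssum (N : ℕ) : ℝ := ∑ k ∈ Finset.range N, Real.log (Nat.factorial k)

lemma log_succ_sub_le (x : ℝ) (hx : 1 ≤ x) : Real.log (x+1) - Real.log x ≤ 1/x := by
  have hx0 : 0 < x := by linarith
  have h := Real.log_le_sub_one_of_pos (show 0 < (x+1)/x by positivity)
  rw [Real.log_div (by linarith) (ne_of_gt hx0)] at h
  have h2 : (x+1)/x - 1 = 1/x := by field_simp; ring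
  linarith

lemma le_log_succ_sub (x : ℝ) (hx : 0 < x) : 1/(x+1) ≤ Real.log (x+1) - Real.log x := by
  have h := Real.log_le_sub_one_of_pos (show 0 < x/(x+1) by positivity)
  rw [Real.log_div (ne_of_gt hx) (by positivity)] at h
  have h2 : x/(x+1) - 1 = -(1/(x+1)) := by field_simp; ring
  linarith

lemma log_factorial_bounds (k : ℕ) (hk : 1 ≤ k) :
    (k:ℝ) * Real.log k - k + 1 ≤ Real.log (Nat.factorial k) ∧
    Real.log (Nat.factorial k) ≤ (k:ℝ) * Real.log k - k + 1 + Real.log k := by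
  induction k, hk using Nat.le_induction with
  | base => simp
  | succ k hk ih =>
    obtain ⟨ih1, ih2⟩ := ih
    have hk1 : (1:ℝ) ≤ (k:ℝ) := by exact_mod_cast hk
    have hk0 : (0:ℝ) < (k:ℝ) := by linarith
    have hfe : Real.log (Nat.factorial (k+1)) = Real.log ((k:ℝ)+1) + Real.log (Nat.factorial k) := by
      rw [Nat.factorial_succ]
      push_cast
      rw [Real.log_mul (by positivity) (by positivity)]
    have hΔ1 := le_log_succ_sub (k:ℝ) hk0
    have hΔ2 := log_succ_sub_le (k:ℝ) hk1
    have e1 : (k:ℝ) * (1/(k:ℝ)) = 1 := by field_simp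
    have e2 : ((k:ℝ)+1) * (1/((k:ℝ)+1)) = 1 := by field_simp
    have hlk : 0 ≤ Real.log (k:ℝ) := Real.log_nonneg hk1
    push_cast
    constructor
    · -- lower
      rw [hfe]
      nlinarith [mul_le_mul_of_nonneg_left hΔ2 hk0.le]
    · rw [hfe]
      nlinarith [mul_le_mul_of_nonneg_left hΔ1 (by positivity : (0:ℝ) ≤ (k:ℝ)+1)]

lemma abs_log_factorial_sub (k : ℕ) :
    |Real.log (Nat.factorial k) - phiAux k| ≤ Real.log k + 1 := by
  rcases Nat.eq_zero_or_pos k with rfl | h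
  · simp [phiAux]
  · obtain ⟨h1, h2⟩ := log_factorial_bounds k h
    have hlk : 0 ≤ Real.log k := Real.log_nonneg (by exact_mod_cast h)
    rw [abs_le]
    unfold phiAux
    constructor <;> nlinarith

lemma sum_klogk_bounds (N : ℕ) :
    (N:ℝ)^2/2 * Real.log N - (N:ℝ)^2/4 - N * Real.log N
      ≤ ∑ k ∈ Finset.range N, (k:ℝ) * Real.log k ∧
    ∑ k ∈ Finset.range N, (k:ℝ) * Real.log k ≤ (N:ℝ)^2/2 * Real.log N - (N:ℝ)^2/4 + 1/4 := by
  induction N with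
  | zero => simp
  | succ N ih =>
    rcases Nat.eq_zero_or_pos N with rfl | hN
    · norm_num
    · rw [Finset.sum_range_succ]
      obtain ⟨ih1, ih2⟩ := ih
      have hN1 : (1:ℝ) ≤ (N:ℝ) := by exact_mod_cast hN
      have hN0 : (0:ℝ) < (N:ℝ) := by linarith
      have hΔ1 := le_log_succ_sub (N:ℝ) hN0
      have hΔ2 := log_succ_sub_le (N:ℝ) hN1
      have hlN : 0 ≤ Real.log (N:ℝ) := Real.log_nonneg hN1
      have hlN1 : 0 ≤ Real.log ((N:ℝ)+1) := Real.log_nonneg (by linarith)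
      have h3 : (N:ℝ)+1 ≤ ((N:ℝ)+1)^2 * (Real.log ((N:ℝ)+1) - Real.log N) := by
        have h := mul_le_mul_of_nonneg_left hΔ1 (by positivity : (0:ℝ) ≤ ((N:ℝ)+1)^2)
        have e : ((N:ℝ)+1)^2 * (1/((N:ℝ)+1)) = (N:ℝ)+1 := by field_simp
        linarith
      have h4 : (N:ℝ)^2 * (Real.log ((N:ℝ)+1) - Real.log N) ≤ N := by
        have h := mul_le_mul_of_nonneg_left hΔ2 (by positivity : (0:ℝ) ≤ (N:ℝ)^2)
        have e : (N:ℝ)^2 * (1/(N:ℝ)) = (N:ℝ) := by field_simp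
        linarith
      push_cast
      constructor
      · nlinarith
      · nlinarith

lemma sum_range_id_real (N : ℕ) : ∑ k ∈ Finset.range N, (k:ℝ) = N*((N:ℝ)-1)/2 := by
  induction N with
  | zero => simp
  | succ N ih => rw [Finset.sum_range_succ, ih]; push_cast; ring

lemma Ssum_err (N : ℕ) : |Ssum N - psiAux N| ≤ (N:ℝ) * Real.log N + N + 1 := by
  obtain ⟨hl, hu⟩ := sum_klogk_bounds N
  have hterm : ∀ k ∈ Finset.range N,
      0 ≤ Real.log (Nat.factorial k) - ((k:ℝ) * Real.log k - k) ∧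
      Real.log (Nat.factorial k) - ((k:ℝ) * Real.log k - k) ≤ 1 + Real.log N := by
    intro k hk
    have hkN : k < N := Finset.mem_range.mp hk
    have hN1 : (1:ℝ) ≤ (N:ℝ) := by exact_mod_cast Nat.one_le_iff_ne_zero.mpr (by omega)
    have hlN : 0 ≤ Real.log (N:ℝ) := Real.log_nonneg hN1
    rcases Nat.eq_zero_or_pos k with rfl | hk1
    · simp; linarith
    · obtain ⟨h1, h2⟩ := log_factorial_bounds k hk1
      have hk0 : (0:ℝ) < (k:ℝ) := by exact_mod_cast hk1
      have hlk : Real.log (k:ℝ) ≤ Real.log (N:ℝ) :=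
        Real.log_le_log hk0 (by exact_mod_cast hkN.le)
      constructor <;> linarith
  have e1 : ∑ k ∈ Finset.range N, (Real.log (Nat.factorial k) - ((k:ℝ) * Real.log k - k))
      = Ssum N - (∑ k ∈ Finset.range N, (k:ℝ) * Real.log k) + N*((N:ℝ)-1)/2 := by
    rw [Finset.sum_sub_distrib, Finset.sum_sub_distrib, sum_range_id_real]
    unfold Ssum; ring
  have hR0 : 0 ≤ ∑ k ∈ Finset.range N, (Real.log (Nat.factorial k) - ((k:ℝ) * Real.log k - k)) :=
    Finset.sum_nonneg (fun k hk => (hterm k hk).1)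
  have hRu : ∑ k ∈ Finset.range N, (Real.log (Nat.factorial k) - ((k:ℝ) * Real.log k - k))
      ≤ N * (1 + Real.log N) := by
    calc ∑ k ∈ Finset.range N, (Real.log (Nat.factorial k) - ((k:ℝ) * Real.log k - k))
        ≤ ∑ _k ∈ Finset.range N, (1 + Real.log N) :=
          Finset.sum_le_sum (fun k hk => (hterm k hk).2)
      _ = N * (1 + Real.log N) := by
          rw [Finset.sum_const, Finset.card_range, nsmul_eq_mul]
  have hNlog : 0 ≤ (N:ℝ) * Real.log N := by
    rcases Nat.eq_zero_or_pos N with rfl | hN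
    · simp
    · exact mul_nonneg (by positivity) (Real.log_nonneg (by exact_mod_cast hN))
  rw [abs_le]
  unfold psiAux
  constructor <;> nlinarith

lemma logC_eq (M n : ℕ) (hM : n + 2 ≤ M) :
    Real.log (Cconst M n) = n * Real.log Real.pi + Real.log (Nat.factorial n)
      + n * Real.log (Nat.factorial (M - n - 1)) + Ssum n + Ssum (M - n) - Ssum (M - n + n) := by
  have ha2 : 2 ≤ M - n := by omega
  set b := M - n - 1 with hb
  -- each factor as logs
  have hfac : ∀ j ∈ Finset.range n,
      Real.log ((((M - n + j - 1).choose j : ℕ) : ℝ)⁻¹ * ((M - n + j : ℕ) : ℝ)⁻¹)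
        = Real.log (Nat.factorial b) + Real.log (Nat.factorial j)
          - Real.log (Nat.factorial (M - n + j)) := by
    intro j _
    have hidx : M - n + j - 1 = b + j := by omega
    have hidx2 : M - n + j = b + j + 1 := by omega
    have hch := Nat.add_choose_mul_factorial_mul_factorial b j
    have hchR : (((b+j).choose j : ℕ) : ℝ) * (Nat.factorial b : ℝ) * (Nat.factorial j : ℝ)
        = (Nat.factorial (b+j) : ℝ) := by exact_mod_cast hch
    have hchpos : (0:ℝ) < (((b+j).choose j : ℕ) : ℝ) := by
      exact_mod_cast Nat.choose_pos (Nat.le_add_left j b)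
    have hbp : (0:ℝ) < (Nat.factorial b : ℝ) := by exact_mod_cast (Nat.factorial_pos b)
    have hjp : (0:ℝ) < (Nat.factorial j : ℝ) := by exact_mod_cast (Nat.factorial_pos j)
    have hlog_ch : Real.log (((b+j).choose j : ℕ) : ℝ)
        = Real.log (Nat.factorial (b+j)) - Real.log (Nat.factorial b)
          - Real.log (Nat.factorial j) := by
      have := congrArg Real.log hchR
      rw [Real.log_mul (by positivity) (ne_of_gt hjp),
        Real.log_mul (ne_of_gt hchpos) (ne_of_gt hbp)] at this
      linarith
    have hfs : Real.log (Nat.factorial (b+j+1))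
        = Real.log (((b+j+1:ℕ)):ℝ) + Real.log (Nat.factorial (b+j)) := by
      rw [Nat.factorial_succ]
      push_cast
      rw [Real.log_mul (by positivity) (by exact_mod_cast (Nat.factorial_pos (b+j)).ne')]
    rw [hidx, hidx2]
    rw [Real.log_mul (by positivity) (by positivity), Real.log_inv, Real.log_inv,
      hlog_ch, hfs]
    ring
  have hprod_ne : ∀ j ∈ Finset.range n,
      ((((M - n + j - 1).choose j : ℕ) : ℝ)⁻¹ * ((M - n + j : ℕ) : ℝ)⁻¹) ≠ 0 := by
    intro j _
    have h1 : (0:ℝ) < (((M - n + j - 1).choose j : ℕ) : ℝ) := by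
      exact_mod_cast Nat.choose_pos (by omega)
    have h2 : (0:ℝ) < ((M - n + j : ℕ) : ℝ) := by exact_mod_cast (by omega : 0 < M - n + j)
    positivity
  have hπ : Real.pi ^ n ≠ 0 := by positivity
  have hnf : (Nat.factorial n : ℝ) ≠ 0 := by exact_mod_cast (Nat.factorial_pos n).ne'
  have hprod : (∏ j ∈ Finset.range n,
      ((((M - n + j - 1).choose j : ℕ) : ℝ)⁻¹ * ((M - n + j : ℕ) : ℝ)⁻¹)) ≠ 0 :=
    Finset.prod_ne_zero_iff.mpr hprod_ne
  unfold Cconst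
  rw [Real.log_mul (by positivity) hprod, Real.log_mul hπ hnf, Real.log_pow,
    Real.log_prod hprod_ne, Finset.sum_congr rfl hfac]
  have hsplit : Ssum (M - n + n) = Ssum (M - n)
      + ∑ j ∈ Finset.range n, Real.log (Nat.factorial (M - n + j)) := by
    unfold Ssum
    exact Finset.sum_range_add _ (M - n) n
  have hsum : ∑ j ∈ Finset.range n,
      (Real.log (Nat.factorial b) + Real.log (Nat.factorial j)
        - Real.log (Nat.factorial (M - n + j)))
      = n * Real.log (Nat.factorial b) + Ssum n
        - ∑ j ∈ Finset.range n, Real.log (Nat.factorial (M - n + j)) := by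
    rw [Finset.sum_sub_distrib, Finset.sum_add_distrib, Finset.sum_const, Finset.card_range,
      nsmul_eq_mul]
    rfl
  rw [hsum]
  have : ∑ j ∈ Finset.range n, Real.log (Nat.factorial (M - n + j))
      = Ssum (M - n + n) - Ssum (M - n) := by linarith
  rw [this]
  ring

lemma main_alg (x A : ℝ) (hx : 1 ≤ x) (hA : 2 ≤ A) :
    A/(2*x) + (A/x)^2/2 * Real.log (A/x) - ((A+x)/x)^2/2 * Real.log ((A+x)/x)
      + ((A-1)/x) * Real.log ((A-1)/x) + Real.log Real.pi / x
    = (x * Real.log Real.pi + psiAux x + psiAux A - psiAux (A+x) + phiAux x + x * phiAux (A-1))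
        / x^2 := by
  have hx0 : x ≠ 0 := by linarith
  rw [Real.log_div (by linarith : A ≠ 0) hx0,
    Real.log_div (by linarith : A + x ≠ 0) hx0,
    Real.log_div (by linarith : A - 1 ≠ 0) hx0]
  unfold psiAux phiAux
  field_simp
  ring

lemma log_nat_div_tendsto : Tendsto (fun n : ℕ => Real.log n / n) atTop (𝓝 0) := by
  have h := Real.isLittleO_log_id_atTop.tendsto_div_nhds_zero
  have h2 := h.comp (tendsto_natCast_atTop_atTop (R := ℝ))
  simpa [Function.comp_def] using h2

lemma log_lin_div_tendsto (K : ℝ) (hK : 1 ≤ K) :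
    Tendsto (fun n : ℕ => Real.log (K*n) / n) atTop (𝓝 0) := by
  have hK0 : K ≠ 0 := by linarith
  have h1 : Tendsto (fun n : ℕ => Real.log K / n + Real.log n / n) atTop (𝓝 0) := by
    simpa using (tendsto_const_div_atTop_nhds_zero_nat (Real.log K)).add log_nat_div_tendsto
  refine h1.congr' ?_
  filter_upwards [eventually_ge_atTop 1] with n hn
  have hn0 : (n:ℝ) ≠ 0 := by positivity
  rw [Real.log_mul hK0 hn0, add_div]

lemma err_S (b : ℕ → ℕ) (K : ℝ) (hK : 1 ≤ K)
    (hb : ∀ᶠ n : ℕ in atTop, (b n : ℝ) ≤ K * n) :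
    Tendsto (fun n : ℕ => (Ssum (b n) - psiAux (b n)) / (n:ℝ)^2) atTop (𝓝 0) := by
  have hg : Tendsto (fun n : ℕ => K * (Real.log (K*n) / n) + (K+1) * (1/n)) atTop (𝓝 0) := by
    simpa using ((log_lin_div_tendsto K hK).const_mul K).add
      (tendsto_one_div_atTop_nhds_zero_nat.const_mul (K+1))
  refine squeeze_zero_norm' ?_ hg
  filter_upwards [hb, eventually_ge_atTop 1] with n hbn hn1
  have hn1' : (1:ℝ) ≤ (n:ℝ) := by exact_mod_cast hn1
  have hn0 : (0:ℝ) < (n:ℝ) := by linarith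
  have hKn1 : (1:ℝ) ≤ K * n := by nlinarith
  have hlKn : 0 ≤ Real.log (K*n) := Real.log_nonneg hKn1
  have hb0 : (0:ℝ) ≤ (b n : ℝ) := by positivity
  have hlb : (b n:ℝ) * Real.log (b n) ≤ K*n * Real.log (K*n) := by
    rcases Nat.lt_or_ge (b n) 2 with h | h
    · have hble : b n ≤ 1 := by omega
      have hz : Real.log ((b n : ℕ) : ℝ) = 0 := by
        rcases Nat.le_one_iff_eq_zero_or_eq_one.mp hble with h0 | h0 <;> rw [h0] <;> simp
      rw [hz]
      nlinarith
    · have h1 : (1:ℝ) ≤ ((b n : ℕ):ℝ) := by exact_mod_cast (by omega : 1 ≤ b n)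
      have hlog : Real.log ((b n : ℕ):ℝ) ≤ Real.log (K*n) := Real.log_le_log (by linarith) hbn
      have hbl0 : 0 ≤ Real.log ((b n : ℕ):ℝ) := Real.log_nonneg h1
      nlinarith
  calc ‖(Ssum (b n) - psiAux (b n)) / (n:ℝ)^2‖
      = |Ssum (b n) - psiAux (b n)| / (n:ℝ)^2 := by
        rw [Real.norm_eq_abs, abs_div, abs_of_nonneg (by positivity : (0:ℝ) ≤ (n:ℝ)^2)]
    _ ≤ ((b n:ℝ)*Real.log (b n) + b n + 1)/(n:ℝ)^2 := by gcongr; exact Ssum_err _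
    _ ≤ (K*n*Real.log (K*n) + K*n + n)/(n:ℝ)^2 := by gcongr <;> linarith
    _ = K*(Real.log (K*n)/n) + (K+1)*(1/n) := by field_simp; ring

lemma err_fact (b : ℕ → ℕ) (K : ℝ) (hK : 1 ≤ K)
    (hb : ∀ᶠ n : ℕ in atTop, (b n : ℝ) ≤ K * n) :
    Tendsto (fun n : ℕ => (Real.log (Nat.factorial (b n)) - phiAux (b n)) / (n:ℝ)) atTop (𝓝 0) := by
  have hg : Tendsto (fun n : ℕ => Real.log (K*n) / n + 1 * (1/n)) atTop (𝓝 0) := by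
    simpa using (log_lin_div_tendsto K hK).add (tendsto_one_div_atTop_nhds_zero_nat.const_mul 1)
  refine squeeze_zero_norm' ?_ hg
  filter_upwards [hb, eventually_ge_atTop 1] with n hbn hn1
  have hn1' : (1:ℝ) ≤ (n:ℝ) := by exact_mod_cast hn1
  have hn0 : (0:ℝ) < (n:ℝ) := by linarith
  have hKn1 : (1:ℝ) ≤ K * n := by nlinarith
  have hlKn : 0 ≤ Real.log (K*n) := Real.log_nonneg hKn1
  have hlog : Real.log ((b n : ℕ):ℝ) ≤ Real.log (K*n) := by
    rcases Nat.eq_zero_or_pos (b n) with h0 | h1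
    · simp [h0, hlKn]
    · exact Real.log_le_log (by exact_mod_cast h1) hbn
  calc ‖(Real.log (Nat.factorial (b n)) - phiAux (b n)) / (n:ℝ)‖
      = |Real.log (Nat.factorial (b n)) - phiAux (b n)| / (n:ℝ) := by
        rw [Real.norm_eq_abs, abs_div, abs_of_nonneg hn0.le]
    _ ≤ (Real.log ((b n : ℕ):ℝ) + 1)/(n:ℝ) := by gcongr; exact abs_log_factorial_sub _
    _ ≤ (Real.log (K*n) + 1)/(n:ℝ) := by gcongr
    _ = Real.log (K*n)/n + 1 * (1/n) := by field_simp

/-- **The asymptotics of the normalizing constant**: if `m n / n → λ > 1`, then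
`(1/n²) log C_{[m n, n]} → B`. -/
theorem normalizing_constant_limit (lam : ℝ) (hlam : 1 < lam)
    (m : ℕ → ℕ) (hm : Tendsto (fun n => (m n : ℝ) / n) atTop (𝓝 lam)) :
    Tendsto (fun n : ℕ => ((n : ℝ) ^ 2)⁻¹ * Real.log (Cconst (m n) n)) atTop
      (𝓝 (Bconst lam)) := by
  have hμ0 : 0 < lam - 1 := by linarith
  set A : ℕ → ℝ := fun n => ((m n - n : ℕ) : ℝ) with hAdef
  -- eventually n + 2 ≤ m n
  have h1 : ∀ᶠ n : ℕ in atTop, 1 + (lam-1)/2 ≤ (m n:ℝ)/n :=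
    hm.eventually (eventually_ge_nhds (by linarith))
  have hNbig : ∀ᶠ n : ℕ in atTop, (4/(lam-1) : ℝ) ≤ (n:ℝ) :=
    tendsto_natCast_atTop_atTop.eventually_ge_atTop _
  have hev_m : ∀ᶠ n : ℕ in atTop, n + 2 ≤ m n := by
    filter_upwards [h1, hNbig, eventually_ge_atTop 1] with n h1n h2n hn1
    have hn1' : (1:ℝ) ≤ (n:ℝ) := by exact_mod_cast hn1
    have hn0 : (0:ℝ) < (n:ℝ) := by linarith
    have hmn : (1 + (lam-1)/2) * n ≤ (m n : ℝ) := by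
      rwa [le_div_iff₀ hn0] at h1n
    have h4 : (4:ℝ) ≤ (lam-1) * n := by
      rw [div_le_iff₀ hμ0] at h2n; linarith
    have : ((n:ℝ) + 2) ≤ (m n : ℝ) := by nlinarith
    exact_mod_cast this
  -- A n / n → lam - 1
  have hA : Tendsto (fun n : ℕ => A n / n) atTop (𝓝 (lam - 1)) := by
    refine Tendsto.congr' ?_ (hm.sub_const 1)
    filter_upwards [hev_m, eventually_ge_atTop 1] with n hmn hn1
    have hn0 : ((n:ℕ):ℝ) ≠ 0 := Nat.cast_ne_zero.mpr (by omega)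
    have hle : n ≤ m n := by omega
    simp only [hAdef]
    rw [Nat.cast_sub hle, sub_div, div_self hn0]
  -- upper bounds for error lemmas
  have hKge : (1:ℝ) ≤ lam + 1 := by linarith
  have hup : ∀ᶠ n : ℕ in atTop, A n / n ≤ lam :=
    hA.eventually (eventually_le_nhds (by linarith))
  have hbndA : ∀ᶠ n : ℕ in atTop, A n ≤ lam * n := by
    filter_upwards [hup, eventually_ge_atTop 1] with n hn hn1
    have hn0 : (0:ℝ) < (n:ℝ) := by exact_mod_cast Nat.pos_of_ne_zero (by omega)
    rw [div_le_iff₀ hn0] at hn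
    linarith
  have hb1 : ∀ᶠ n : ℕ in atTop, ((n:ℕ):ℝ) ≤ (lam+1) * n := by
    filter_upwards with n
    nlinarith [Nat.cast_nonneg (α := ℝ) n]
  have hb2 : ∀ᶠ n : ℕ in atTop, ((m n - n:ℕ):ℝ) ≤ (lam+1) * n := by
    filter_upwards [hbndA] with n hn
    have : (0:ℝ) ≤ (n:ℝ) := Nat.cast_nonneg n
    calc ((m n - n:ℕ):ℝ) = A n := rfl
      _ ≤ lam * n := hn
      _ ≤ (lam+1)*n := by nlinarith
  have hb3 : ∀ᶠ n : ℕ in atTop, ((m n - n + n:ℕ):ℝ) ≤ (lam+1) * n := by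
    filter_upwards [hbndA] with n hn
    have e : ((m n - n + n:ℕ):ℝ) = A n + n := by push_cast [hAdef]; ring
    rw [e]
    nlinarith [Nat.cast_nonneg (α := ℝ) n]
  have hb4 : ∀ᶠ n : ℕ in atTop, ((m n - n - 1:ℕ):ℝ) ≤ (lam+1) * n := by
    filter_upwards [hb2] with n hn
    have : ((m n - n - 1:ℕ):ℝ) ≤ ((m n - n:ℕ):ℝ) := Nat.cast_le.mpr (Nat.sub_le _ _)
    linarith
  -- error terms
  have E1 := err_S (fun n => n) (lam+1) hKge hb1
  have E2 := err_S (fun n => m n - n) (lam+1) hKge hb2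
  have E3 := err_S (fun n => m n - n + n) (lam+1) hKge hb3
  have E4 := err_fact (fun n => n) (lam+1) hKge hb1
  have E5 := err_fact (fun n => m n - n - 1) (lam+1) hKge hb4
  have E4' : Tendsto (fun n : ℕ => (Real.log (Nat.factorial n) - phiAux n) / (n:ℝ)^2)
      atTop (𝓝 0) := by
    have h := E4.mul tendsto_one_div_atTop_nhds_zero_nat
    rw [mul_zero] at h
    exact h.congr (fun n => by ring)
  -- main term limit
  have hlogu : Tendsto (fun n : ℕ => Real.log (A n / n)) atTop (𝓝 (Real.log (lam - 1))) :=
    ((Real.continuousAt_log hμ0.ne').tendsto).comp hA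
  have ht1 : Tendsto (fun n : ℕ => A n / (2*(n:ℝ))) atTop (𝓝 ((lam-1)/2)) := by
    have := hA.div_const 2
    exact this.congr (fun n => by ring)
  have ht2 : Tendsto (fun n : ℕ => (A n/(n:ℝ))^2/2 * Real.log (A n/(n:ℝ))) atTop
      (𝓝 (((lam-1)*(lam-1))/2 * Real.log (lam-1))) := by
    have := ((hA.mul hA).div_const 2).mul hlogu
    exact this.congr (fun n => by ring)
  have hv : Tendsto (fun n : ℕ => (A n + (n:ℝ))/(n:ℝ)) atTop (𝓝 lam) := by
    have h0 : Tendsto (fun n : ℕ => A n/(n:ℝ) + 1) atTop (𝓝 lam) := by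
      have := hA.add_const 1
      rwa [sub_add_cancel] at this
    refine Tendsto.congr' ?_ h0
    filter_upwards [eventually_ge_atTop 1] with n hn1
    have hn0 : ((n:ℕ):ℝ) ≠ 0 := Nat.cast_ne_zero.mpr (by omega)
    rw [add_div, div_self hn0]
  have hlogv : Tendsto (fun n : ℕ => Real.log ((A n + (n:ℝ))/(n:ℝ))) atTop
      (𝓝 (Real.log lam)) :=
    ((Real.continuousAt_log (by linarith : lam ≠ 0)).tendsto).comp hv
  have ht3 : Tendsto (fun n : ℕ => ((A n + (n:ℝ))/(n:ℝ))^2/2 * Real.log ((A n + (n:ℝ))/(n:ℝ)))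
      atTop (𝓝 ((lam*lam)/2 * Real.log lam)) := by
    have := ((hv.mul hv).div_const 2).mul hlogv
    exact this.congr (fun n => by ring)
  have hw : Tendsto (fun n : ℕ => (A n - 1)/(n:ℝ)) atTop (𝓝 (lam - 1)) := by
    have h0 := hA.sub tendsto_one_div_atTop_nhds_zero_nat
    rw [sub_zero] at h0
    exact h0.congr (fun n => by ring)
  have hlogw : Tendsto (fun n : ℕ => Real.log ((A n - 1)/(n:ℝ))) atTop
      (𝓝 (Real.log (lam - 1))) :=
    ((Real.continuousAt_log hμ0.ne').tendsto).comp hw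
  have ht4 : Tendsto (fun n : ℕ => ((A n - 1)/(n:ℝ)) * Real.log ((A n - 1)/(n:ℝ))) atTop
      (𝓝 ((lam-1) * Real.log (lam-1))) := hw.mul hlogw
  have ht5 : Tendsto (fun n : ℕ => Real.log Real.pi / (n:ℝ)) atTop (𝓝 0) :=
    tendsto_const_div_atTop_nhds_zero_nat _
  have hR : Tendsto (fun n : ℕ =>
      A n/(2*(n:ℝ)) + (A n/(n:ℝ))^2/2 * Real.log (A n/(n:ℝ))
        - ((A n + (n:ℝ))/(n:ℝ))^2/2 * Real.log ((A n + (n:ℝ))/(n:ℝ))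
        + ((A n - 1)/(n:ℝ)) * Real.log ((A n - 1)/(n:ℝ)) + Real.log Real.pi / (n:ℝ)) atTop
      (𝓝 ((lam-1)/2 + ((lam-1)*(lam-1))/2 * Real.log (lam-1) - (lam*lam)/2 * Real.log lam
          + (lam-1) * Real.log (lam-1) + 0)) :=
    (((ht1.add ht2).sub ht3).add ht4).add ht5
  -- total
  have htot := ((((hR.add E1).add E2).sub E3).add E4').add E5
  rw [show ((lam-1)/2 + ((lam-1)*(lam-1))/2 * Real.log (lam-1) - (lam*lam)/2 * Real.log lam
      + (lam-1) * Real.log (lam-1) + 0) + 0 + 0 - 0 + 0 + 0 = Bconst lam by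
    unfold Bconst; ring] at htot
  refine Tendsto.congr' ?_ htot
  filter_upwards [hev_m, eventually_ge_atTop 1] with n hmn hn1
  have hn1' : (1:ℝ) ≤ (n:ℝ) := by exact_mod_cast hn1
  have hn0 : ((n:ℕ):ℝ) ≠ 0 := by positivity
  have hA2 : (2:ℝ) ≤ A n := by
    have h2 : 2 ≤ m n - n := by omega
    simp only [hAdef]
    exact_mod_cast h2
  have hcast2 : ((m n - n + n:ℕ):ℝ) = A n + n := by push_cast [hAdef]; ring
  have hcast3 : ((m n - n - 1:ℕ):ℝ) = A n - 1 := by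
    have h1 : 1 ≤ m n - n := by omega
    simp only [hAdef]
    push_cast [Nat.cast_sub h1]
    ring
  have halg := main_alg (n:ℝ) (A n) hn1' hA2
  have hlogC := logC_eq (m n) n hmn
  simp only [hcast2, hcast3]
  rw [halg, hlogC]
  have : Ssum (m n - n) - psiAux (A n) = Ssum (m n - n) - psiAux ((m n - n:ℕ):ℝ) := rfl
  field_simp
  ring
end
end
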